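/- Let n : ℕ, β : ℝ, and set p = 1/(1 + exp β). Let C be a unitary matrix in Matrix (Fin n → Fin 2) (Fin n → Fin 2) ℂ, let H_NI be the diagonal matrix whose diagonal entry at x is the Hamming weight |x|, and let H = C * H_NI * Cᴴ be the parent Hamiltonian. Then the Gibbs state exp(-β • H) / trace(exp(-β • H)) equals C * D * Cᴴ, where D is the diagonal matrix whose diagonal entry at x is ∏_{i : Fin n} (if x i = 1 then p else 1 - p). In other words, the Gibbs state of the parent Hamiltonian at inverse temperature β is the output of the circuit C applied to an input in which each qubit is independently bit-flipped from |0⟩ with probability p = 1/(1 + exp β). -/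

import Mathlib

open Matrix NormedSpace

/-- The Gibbs state of the parent Hamiltonian `H = C * H_NI * Cᴴ` at inverse
temperature `β` is the output of the circuit `C` applied to an input where each
qubit is independently bit-flipped from `|0⟩` with probability `p = 1/(1 + exp β)`. -/
theorem gibbs_parentHamiltonian_eq_noisy_circuit (n : ℕ) (β : ℝ) (p : ℝ)
    (hp : p = 1 / (1 + Real.exp β))
    (C : Matrix (Fin n → Fin 2) (Fin n → Fin 2) ℂ)
    (hC : C ∈ Matrix.unitaryGroup (Fin n → Fin 2) ℂ)
    (H_NI : Matrix (Fin n → Fin 2) (Fin n → Fin 2) ℂ)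
    (hH : H_NI = Matrix.diagonal fun x =>
      ((Finset.univ.filter fun i => x i = 1).card : ℂ))
    (H : Matrix (Fin n → Fin 2) (Fin n → Fin 2) ℂ)
    (hHdef : H = C * H_NI * Cᴴ)
    (D : Matrix (Fin n → Fin 2) (Fin n → Fin 2) ℂ)
    (hD : D = Matrix.diagonal (fun x : Fin n → Fin 2 =>
      ∏ i : Fin n, (if x i = 1 then (p : ℂ) else (1 - p : ℂ)))) :
    (NormedSpace.exp ((-β) • H)).trace⁻¹ • NormedSpace.exp ((-β) • H) =
      C * D * Cᴴ := by
  -- basic facts about C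
  have h2 : C * Cᴴ = 1 := by
    rw [← Matrix.star_eq_conjTranspose]; exact hC.2
  have h1 : Cᴴ * C = 1 := by
    rw [← Matrix.star_eq_conjTranspose]; exact hC.1
  have hCu : IsUnit C := ⟨⟨C, Cᴴ, h2, h1⟩, rfl⟩
  have hCinv : C⁻¹ = Cᴴ := Matrix.inv_eq_right_inv h2
  -- real quantities
  set E : ℝ := Real.exp (-β) with hE
  have hEpos : (0:ℝ) < E := Real.exp_pos _
  have hden : (1:ℝ) + E ≠ 0 := by positivity
  have hexpβ : (0:ℝ) < Real.exp β := Real.exp_pos _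
  have hdenβ : (1:ℝ) + Real.exp β ≠ 0 := by positivity
  have hpE : p = E / (1 + E) := by
    rw [hp, hE, Real.exp_neg]
    field_simp
    ring
  have hqE : 1 - p = 1 / (1 + E) := by
    rw [hpE]; field_simp; ring
  -- the diagonal function
  set f : (Fin n → Fin 2) → ℂ :=
    fun x => ∏ i : Fin n, (if x i = 1 then (E : ℂ) else 1) with hf
  -- exp of the non-interacting Hamiltonian
  have hexpNI : NormedSpace.exp ((-β) • H_NI) = Matrix.diagonal f := by
    rw [hH, ← Matrix.diagonal_smul, Matrix.exp_diagonal]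
    refine congrArg Matrix.diagonal ?_
    rw [Pi.exp_def]
    funext x
    simp only [Pi.smul_apply]
    rw [← Complex.exp_eq_exp_ℂ, hf]
    have hcard : (((Finset.univ.filter fun i => x i = 1).card : ℕ) : ℂ)
        = ∑ i : Fin n, (if x i = 1 then (1:ℂ) else 0) := by
      rw [Finset.card_filter]
      push_cast
      simp
    rw [Complex.real_smul, hcard, Finset.mul_sum, Complex.exp_sum]
    refine Finset.prod_congr rfl fun i _ => ?_
    by_cases h : x i = 1
    · simp only [h, if_true, mul_one, hE]
      rw [← Complex.ofReal_exp]
    · simp [h]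
  -- exp of the parent Hamiltonian
  have hexpH : NormedSpace.exp ((-β) • H) = C * Matrix.diagonal f * Cᴴ := by
    rw [hHdef, ← hCinv]
    have hsm : (-β) • (C * H_NI * C⁻¹) = C * ((-β) • H_NI) * C⁻¹ := by
      rw [Matrix.mul_smul, Matrix.smul_mul]
    rw [hsm, Matrix.exp_conj C _ hCu, hexpNI, hCinv]
  -- the trace
  have htr : (NormedSpace.exp ((-β) • H)).trace = ((1 + E : ℝ) : ℂ) ^ n := by
    rw [hexpH, Matrix.trace_mul_cycle, h1, Matrix.one_mul, Matrix.trace_diagonal, hf]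
    have h := Finset.sum_prod_piFinset (ι := Fin n) (Finset.univ : Finset (Fin 2))
      (fun _ b => if b = 1 then (E:ℂ) else 1)
    rw [Fintype.piFinset_univ] at h
    rw [h, Fin.sum_univ_two]
    norm_num
  -- the rescaled diagonal is D
  have key : (((1 + E : ℝ) : ℂ) ^ n)⁻¹ • Matrix.diagonal f = D := by
    rw [hD, ← Matrix.diagonal_smul]
    refine congrArg Matrix.diagonal ?_
    funext x
    simp only [Pi.smul_apply, smul_eq_mul]
    have hfac : ∀ i : Fin n, (if x i = 1 then (p:ℂ) else (1-p:ℂ))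
        = (if x i = 1 then (E:ℂ) else 1) * (((1+E:ℝ):ℂ))⁻¹ := by
      intro i
      by_cases h : x i = 1
      · simp only [h, if_true, hpE]
        push_cast
        rw [div_eq_mul_inv]
      · simp only [h, if_false]
        have : ((1-p : ℝ):ℂ) = ((1+E:ℝ):ℂ)⁻¹ := by
          rw [hqE]; push_cast; rw [one_div]
        push_cast at this ⊢
        rw [this, one_mul]
    rw [Finset.prod_congr rfl (fun i _ => hfac i), Finset.prod_mul_distrib,
      Finset.prod_const, Finset.card_univ, Fintype.card_fin, ← inv_pow, mul_comm, hf]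
  -- finish
  rw [htr, hexpH, ← key, Matrix.mul_smul, Matrix.smul_mul]
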